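/- Let x_1 < x_2 < ⋯ be a strictly increasing real sequence and (υ_n) nonnegative reals. Then sup_{n} e^{x_n} ∑_{k ≥ n} υ_k e^{−x_k} < ∞ if and only if sup_{m ∈ ℤ} ∑_{k : x_k ∈ [m, m+1)} υ_k < ∞ (assuming x_n → ∞). -/

import Mathlib

open Filter

/-- Weighted discrete Hardy-type condition: for a strictly increasing sequence `x_n → ∞`
and nonnegative weights `υ_n` with summable `υ_k e^{-x_k}`, the condition
`sup_n e^{x_n} ∑_{k ≥ n} υ_k e^{-x_k} < ∞` holds iff
`sup_{m ∈ ℤ} ∑_{k : x_k ∈ [m, m+1)} υ_k < ∞`. -/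
theorem stmt5 (x : ℕ → ℝ) (hx : StrictMono x) (hxtop : Tendsto x atTop atTop)
    (v : ℕ → ℝ) (hv : ∀ n, 0 ≤ v n)
    (hsum : Summable fun k => v k * Real.exp (-x k)) :
    (∃ C : ℝ, ∀ n : ℕ,
        Real.exp (x n) * (∑' k : ℕ, if n ≤ k then v k * Real.exp (-x k) else 0) ≤ C) ↔
    (∃ C : ℝ, ∀ m : ℤ,
        (∑' k : ℕ, Set.indicator {k : ℕ | (m : ℝ) ≤ x k ∧ x k < m + 1} v k) ≤ C) := by
  classical
  set f : ℕ → ℝ := fun k => v k * Real.exp (-x k) with hfdef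
  have hf0 : ∀ k, 0 ≤ f k := fun k => mul_nonneg (hv k) (Real.exp_pos _).le
  have hg : ∀ n : ℕ, Summable (fun k => if n ≤ k then f k else 0) := by
    intro n
    refine Summable.of_nonneg_of_le (fun k => ?_) (fun k => ?_) hsum
    · by_cases h : n ≤ k <;> simp [h, hf0 k]
    · by_cases h : n ≤ k <;> simp [h, hf0 k]
  have hind : ∀ (m : ℤ) (k : ℕ), k ∈ {k : ℕ | (m : ℝ) ≤ x k ∧ x k < m + 1} →
      v k ≤ Real.exp ((m : ℝ) + 1) * f k := by
    intro m k hk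
    have h1 : Real.exp (x k) ≤ Real.exp ((m : ℝ) + 1) := Real.exp_le_exp.mpr hk.2.le
    have hv' : v k = v k * Real.exp (-x k) * Real.exp (x k) := by
      rw [mul_assoc, ← Real.exp_add]; simp
    rw [hv']
    calc v k * Real.exp (-x k) * Real.exp (x k)
        ≤ v k * Real.exp (-x k) * Real.exp ((m : ℝ) + 1) :=
          mul_le_mul_of_nonneg_left h1 (mul_nonneg (hv k) (Real.exp_pos _).le)
      _ = Real.exp ((m : ℝ) + 1) * f k := by rw [hfdef]; ring
  have hIndS : ∀ m : ℤ,
      Summable (Set.indicator {k : ℕ | (m : ℝ) ≤ x k ∧ x k < m + 1} v) := by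
    intro m
    refine Summable.of_nonneg_of_le
      (fun k => Set.indicator_nonneg (fun k _ => hv k) k) (fun k => ?_)
      (hsum.mul_left (Real.exp ((m : ℝ) + 1)))
    by_cases hk : k ∈ {k : ℕ | (m : ℝ) ≤ x k ∧ x k < m + 1}
    · rw [Set.indicator_of_mem hk]; exact hind m k hk
    · rw [Set.indicator_of_notMem hk]
      exact mul_nonneg (Real.exp_pos _).le (hf0 k)
  constructor
  · rintro ⟨C, hC⟩
    have hC0 : 0 ≤ C := by
      refine le_trans ?_ (hC 0)
      exact mul_nonneg (Real.exp_pos _).le (tsum_nonneg fun k => by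
        by_cases h : (0 : ℕ) ≤ k <;> simp [h, hf0 k, hv k, mul_nonneg (hv k) (Real.exp_pos (-x k)).le])
    refine ⟨Real.exp 1 * C, fun m => ?_⟩
    by_cases h : ∃ k, (m : ℝ) ≤ x k
    · set n := Nat.find h with hn
      have hxn : (m : ℝ) ≤ x n := Nat.find_spec h
      have key : ∀ k, Set.indicator {k : ℕ | (m : ℝ) ≤ x k ∧ x k < m + 1} v k ≤
          Real.exp ((m : ℝ) + 1) * (if n ≤ k then f k else 0) := by
        intro k
        by_cases hk : k ∈ {k : ℕ | (m : ℝ) ≤ x k ∧ x k < m + 1}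
        · rw [Set.indicator_of_mem hk]
          have hnk : n ≤ k := by
            by_contra hlt
            exact Nat.find_min h (lt_of_not_ge hlt) hk.1
          rw [if_pos hnk]; exact hind m k hk
        · rw [Set.indicator_of_notMem hk]
          by_cases hnk : n ≤ k
          · rw [if_pos hnk]; exact mul_nonneg (Real.exp_pos _).le (hf0 k)
          · rw [if_neg hnk]; simp
      have h1 := Summable.tsum_le_tsum key (hIndS m) ((hg n).mul_left _)
      rw [tsum_mul_left] at h1
      have h2 : (∑' k, if n ≤ k then f k else 0) ≤ Real.exp (-x n) * C := by
        have := mul_le_mul_of_nonneg_left (hC n) (Real.exp_pos (-x n)).le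
        calc (∑' k, if n ≤ k then f k else 0)
            = Real.exp (-x n) * (Real.exp (x n) *
                (∑' k, if n ≤ k then f k else 0)) := by
              rw [← mul_assoc, ← Real.exp_add]; simp
          _ ≤ Real.exp (-x n) * C := this
      have h3 : Real.exp (-x n) * C ≤ Real.exp (-(m : ℝ)) * C :=
        mul_le_mul_of_nonneg_right (Real.exp_le_exp.mpr (by linarith)) hC0
      calc (∑' k, Set.indicator {k : ℕ | (m : ℝ) ≤ x k ∧ x k < m + 1} v k)
          ≤ Real.exp ((m : ℝ) + 1) * (∑' k, if n ≤ k then f k else 0) := h1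
        _ ≤ Real.exp ((m : ℝ) + 1) * (Real.exp (-(m : ℝ)) * C) := by
            refine mul_le_mul_of_nonneg_left (le_trans h2 h3) (Real.exp_pos _).le
        _ = Real.exp 1 * C := by rw [← mul_assoc, ← Real.exp_add]; ring_nf
    · push_neg at h
      have : ∀ k, Set.indicator {k : ℕ | (m : ℝ) ≤ x k ∧ x k < m + 1} v k = 0 := by
        intro k
        apply Set.indicator_of_notMem
        intro hk
        exact absurd hk.1 (not_le.mpr (h k))
      rw [tsum_congr this, tsum_zero]
      exact mul_nonneg (Real.exp_pos _).le hC0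
  · rintro ⟨C, hC⟩
    have hT0 : ∀ m : ℤ, (0 : ℝ) ≤
        ∑' k, Set.indicator {k : ℕ | (m : ℝ) ≤ x k ∧ x k < m + 1} v k :=
      fun m => tsum_nonneg fun k => Set.indicator_nonneg (fun k _ => hv k) k
    have hC0 : 0 ≤ C := le_trans (hT0 0) (hC 0)
    set r : ℝ := Real.exp (-1) with hrdef
    have hr0 : 0 ≤ r := (Real.exp_pos _).le
    have hr1 : r < 1 := Real.exp_lt_one_iff.mpr (by norm_num)
    have hrpos : 0 < 1 - r := by linarith
    refine ⟨Real.exp 1 * ((1 - r)⁻¹ * C), fun n => ?_⟩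
    set m0 : ℤ := ⌊x n⌋ with hm0
    have hfl : (m0 : ℝ) ≤ x n := Int.floor_le _
    have hfl2 : x n < (m0 : ℝ) + 1 := Int.lt_floor_add_one _
    have key : (∑' k, if n ≤ k then f k else 0) ≤
        Real.exp (-(m0 : ℝ)) * ((1 - r)⁻¹ * C) := by
      apply Summable.tsum_le_of_sum_le (hg n)
      intro F
      set φ : ℕ → ℤ := fun k => ⌊x k⌋ with hφ
      set F' := F.filter (fun k => n ≤ k) with hF'
      have e1 : ∑ k ∈ F, (if n ≤ k then f k else 0) = ∑ k ∈ F', f k :=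
        (Finset.sum_filter _ _).symm
      have e2 : ∑ k ∈ F', f k =
          ∑ m ∈ F'.image φ, ∑ k ∈ F'.filter (fun k => φ k = m), f k :=
        (Finset.sum_fiberwise_of_maps_to (fun k hk => Finset.mem_image_of_mem _ hk) f).symm
      have hm0le : ∀ m ∈ F'.image φ, m0 ≤ m := by
        intro m hm
        obtain ⟨k, hk, rfl⟩ := Finset.mem_image.mp hm
        have hnk : n ≤ k := (Finset.mem_filter.mp hk).2
        exact Int.floor_le_floor (hx.monotone hnk)
      have inner : ∀ m ∈ F'.image φ,
          ∑ k ∈ F'.filter (fun k => φ k = m), f k ≤ Real.exp (-(m : ℝ)) * C := by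
        intro m hm
        have step1 : ∀ k ∈ F'.filter (fun k => φ k = m),
            f k ≤ Real.exp (-(m : ℝ)) * v k := by
          intro k hk
          have hkm : ⌊x k⌋ = m := (Finset.mem_filter.mp hk).2
          have hmx : (m : ℝ) ≤ x k := hkm ▸ Int.floor_le (x k)
          have h2 : Real.exp (-x k) ≤ Real.exp (-(m : ℝ)) :=
            Real.exp_le_exp.mpr (by linarith)
          calc f k = v k * Real.exp (-x k) := rfl
            _ ≤ v k * Real.exp (-(m : ℝ)) := mul_le_mul_of_nonneg_left h2 (hv k)
            _ = Real.exp (-(m : ℝ)) * v k := mul_comm _ _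
        have step2 : ∑ k ∈ F'.filter (fun k => φ k = m), v k ≤ C := by
          refine le_trans ?_ (hC m)
          have eq3 : ∑ k ∈ F'.filter (fun k => φ k = m), v k =
              ∑ k ∈ F'.filter (fun k => φ k = m),
                Set.indicator {k : ℕ | (m : ℝ) ≤ x k ∧ x k < m + 1} v k := by
            refine Finset.sum_congr rfl fun k hk => ?_
            have hkm : ⌊x k⌋ = m := (Finset.mem_filter.mp hk).2
            have hmem : k ∈ {k : ℕ | (m : ℝ) ≤ x k ∧ x k < m + 1} :=
              ⟨hkm ▸ Int.floor_le (x k), hkm ▸ Int.lt_floor_add_one (x k)⟩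
            rw [Set.indicator_of_mem hmem]
          rw [eq3]
          exact Summable.sum_le_tsum _ (fun k _ => Set.indicator_nonneg (fun k _ => hv k) k)
            (hIndS m)
        calc ∑ k ∈ F'.filter (fun k => φ k = m), f k
            ≤ ∑ k ∈ F'.filter (fun k => φ k = m), Real.exp (-(m : ℝ)) * v k :=
              Finset.sum_le_sum step1
          _ = Real.exp (-(m : ℝ)) * ∑ k ∈ F'.filter (fun k => φ k = m), v k :=
              (Finset.mul_sum _ _ _).symm
          _ ≤ Real.exp (-(m : ℝ)) * C :=
              mul_le_mul_of_nonneg_left step2 (Real.exp_pos _).le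
      set ψ : ℤ → ℕ := fun m => (m - m0).toNat with hψ
      have hinj : ∀ a ∈ F'.image φ, ∀ b ∈ F'.image φ, ψ a = ψ b → a = b := by
        intro a ha b hb hab
        have ha0 := hm0le a ha
        have hb0 := hm0le b hb
        simp only [hψ] at hab
        omega
      have e4 : ∀ m ∈ F'.image φ,
          Real.exp (-(m0 : ℝ)) * r ^ (ψ m) = Real.exp (-(m : ℝ)) := by
        intro m hm
        have hle := hm0le m hm
        have hZ : ((ψ m : ℕ) : ℤ) = m - m0 := by
          simp only [hψ]; exact Int.toNat_of_nonneg (by omega)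
        have hcast : ((ψ m : ℕ) : ℝ) = (m : ℝ) - (m0 : ℝ) := by
          rw [← Int.cast_natCast, hZ]; push_cast; ring
        rw [hrdef, ← Real.exp_nat_mul, ← Real.exp_add]
        congr 1
        rw [hcast]; ring
      have e5 : ∑ m ∈ F'.image φ, Real.exp (-(m : ℝ)) =
          ∑ j ∈ (F'.image φ).image ψ, Real.exp (-(m0 : ℝ)) * r ^ j := by
        rw [Finset.sum_image hinj]
        exact (Finset.sum_congr rfl e4).symm
      have e6 : ∑ j ∈ (F'.image φ).image ψ, Real.exp (-(m0 : ℝ)) * r ^ j ≤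
          Real.exp (-(m0 : ℝ)) * (1 - r)⁻¹ := by
        have hs : Summable (fun j : ℕ => Real.exp (-(m0 : ℝ)) * r ^ j) :=
          (summable_geometric_of_lt_one hr0 hr1).mul_left _
        have := Summable.sum_le_tsum ((F'.image φ).image ψ)
          (fun j _ => mul_nonneg (Real.exp_pos _).le (pow_nonneg hr0 j)) hs
        rwa [tsum_mul_left, tsum_geometric_of_lt_one hr0 hr1] at this
      calc ∑ k ∈ F, (if n ≤ k then f k else 0)
          = ∑ m ∈ F'.image φ, ∑ k ∈ F'.filter (fun k => φ k = m), f k := by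
            rw [e1, e2]
        _ ≤ ∑ m ∈ F'.image φ, Real.exp (-(m : ℝ)) * C := Finset.sum_le_sum inner
        _ = (∑ m ∈ F'.image φ, Real.exp (-(m : ℝ))) * C := by
            rw [Finset.sum_mul]
        _ ≤ Real.exp (-(m0 : ℝ)) * (1 - r)⁻¹ * C := by
            refine mul_le_mul_of_nonneg_right ?_ hC0
            rw [e5]; exact e6
        _ = Real.exp (-(m0 : ℝ)) * ((1 - r)⁻¹ * C) := by ring
    calc Real.exp (x n) * (∑' k, if n ≤ k then f k else 0)
        ≤ Real.exp (x n) * (Real.exp (-(m0 : ℝ)) * ((1 - r)⁻¹ * C)) :=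
          mul_le_mul_of_nonneg_left key (Real.exp_pos _).le
      _ = Real.exp (x n - (m0 : ℝ)) * ((1 - r)⁻¹ * C) := by
          rw [← mul_assoc, ← Real.exp_add]; ring_nf
      _ ≤ Real.exp 1 * ((1 - r)⁻¹ * C) := by
          refine mul_le_mul_of_nonneg_right (Real.exp_le_exp.mpr (by linarith)) ?_
          exact mul_nonneg (inv_nonneg.mpr hrpos.le) hC0
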